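/- Let w_1, w_2 ∈ S_4 be the permutations of {1, 2, 3, 4} given in one-line notation by w_1 = 1324 (the transposition (2 3)) and w_2 = 4231 (the transposition (1 4)). Then w_1 ⪯ w_2 in the Bruhat order, but (w_1, w_2) is not a good pair. -/
import Mathlib

open Finset

/-- The number of inversions of a permutation of `Fin n`. -/
def invCount {n : ℕ} (u : Equiv.Perm (Fin n)) : ℕ :=
  (Finset.univ.filter fun p : Fin n × Fin n => p.1 < p.2 ∧ u p.2 < u p.1).card

/-- Bruhat order: `w₁ ⪯ w₂` iff `w₂ = τ_r ⋯ τ_1 w₁` for transpositions `τ_k` with the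
number of inversions strictly increasing along the partial products. -/
def BruhatLe {n : ℕ} (w₁ w₂ : Equiv.Perm (Fin n)) : Prop :=
  ∃ l : List (Equiv.Perm (Fin n)),
    (∀ τ ∈ l, ∃ a b : Fin n, a ≠ b ∧ τ = Equiv.swap a b) ∧
    w₂ = l.reverse.prod * w₁ ∧
    ∀ k < l.length,
      invCount ((l.take k).reverse.prod * w₁) < invCount ((l.take (k + 1)).reverse.prod * w₁)

/-- A pair `(w₁, w₂)` is *good* if moreover each transposition swaps two elements in a
common orbit of `w₁ w₂⁻¹`. -/
def IsGoodPair {n : ℕ} (w₁ w₂ : Equiv.Perm (Fin n)) : Prop :=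
  ∃ l : List (Equiv.Perm (Fin n)),
    (∀ τ ∈ l, ∃ a b : Fin n, a ≠ b ∧ τ = Equiv.swap a b ∧ (w₁ * w₂⁻¹).SameCycle a b) ∧
    w₂ = l.reverse.prod * w₁ ∧
    ∀ k < l.length,
      invCount ((l.take k).reverse.prod * w₁) < invCount ((l.take (k + 1)).reverse.prod * w₁)

lemma take_succ_prod {n : ℕ} (l : List (Equiv.Perm (Fin n))) (k : ℕ) (h : k < l.length) :
    (l.take (k + 1)).reverse.prod = l[k] * (l.take k).reverse.prod := by
  rw [List.take_succ, List.getElem?_eq_getElem h, Option.toList_some, List.reverse_append,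
    List.reverse_singleton, List.singleton_append, List.prod_cons]

theorem not_goodPair_1324_4231 :
    BruhatLe (Equiv.swap (1 : Fin 4) 2) (Equiv.swap (0 : Fin 4) 3) ∧
      ¬ IsGoodPair (Equiv.swap (1 : Fin 4) 2) (Equiv.swap (0 : Fin 4) 3) := by
  constructor
  · refine ⟨[Equiv.swap 0 1, Equiv.swap 0 3, Equiv.swap 1 2, Equiv.swap 2 3], ?_, ?_, ?_⟩
    · intro τ hτ
      simp only [List.mem_cons, List.not_mem_nil, or_false] at hτ
      rcases hτ with h | h | h | h
      · exact ⟨0, 1, by decide, h⟩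
      · exact ⟨0, 3, by decide, h⟩
      · exact ⟨1, 2, by decide, h⟩
      · exact ⟨2, 3, by decide, h⟩
    · decide
    · decide
  · rintro ⟨l, hτ, hw, hmono⟩
    set w₁ : Equiv.Perm (Fin 4) := Equiv.swap 1 2 with hw₁
    set s03 : Equiv.Perm (Fin 4) := Equiv.swap 0 3 with hs03
    set s12 : Equiv.Perm (Fin 4) := Equiv.swap 1 2 with hs12
    have key : ∀ k ≤ l.length,
        (l.take k).reverse.prod * w₁ = w₁ ∨ (l.take k).reverse.prod * w₁ = s03 * w₁ := by
      intro k hk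
      induction k with
      | zero => left; simp
      | succ k ih =>
        have hk' : k < l.length := Nat.lt_of_succ_le hk
        have ih' := ih (Nat.le_of_lt hk')
        have hmem : l[k] ∈ l := List.getElem_mem hk'
        obtain ⟨a, b, hab, hτab, hsc⟩ := hτ l[k] hmem
        have hgen : ∀ a b : Fin 4, a ≠ b →
            (Equiv.swap (1 : Fin 4) 2 * (Equiv.swap (0 : Fin 4) 3)⁻¹).SameCycle a b →
            Equiv.swap a b = s12 ∨ Equiv.swap a b = s03 := by decide
        have hτval : l[k] = s12 ∨ l[k] = s03 := by
          rw [hτab]; exact hgen a b hab hsc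
        have hstep := hmono k hk'
        rw [take_succ_prod l k hk', mul_assoc] at hstep ⊢
        rcases ih' with h | h <;> rw [h] at hstep ⊢ <;>
          rcases hτval with h' | h' <;> rw [h'] at hstep ⊢
        · exact absurd hstep (by decide)
        · right; rfl
        · exact absurd hstep (by decide)
        · exact absurd hstep (by decide)
    have := key l.length le_rfl
    rw [List.take_length, ← hw] at this
    revert this; decide
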